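/- arXiv:0704.1415 — 3 statements merged into one kernel-verified Lean document; each statement's English description precedes it below -/
import Mathlib

section
/- Let X be a random variable with the gamma density g_α(x) = x^{α−1} e^{−x}/Γ(α) on (0,∞), α > 0. Then for every t > 0 the Laplace transform of X² is given by the convergent series E[ e^{−t X²} ] = (2Γ(α))^{−1} Σ_{k=0}^∞ (−1)^k (Γ((α+k)/2)/k!) · t^{−(α+k)/2}. -/
open MeasureTheory ProbabilityTheory Real Set
open scoped NNReal ENNReal

section Aux

variable {α t : ℝ}

lemma rpow_two' (x : ℝ) : x ^ (2:ℝ) = x ^ 2 := by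
  rw [show (2:ℝ) = ((2:ℕ):ℝ) by norm_num, Real.rpow_natCast]

lemma aux_base (ht : 0 < t) {s : ℝ} (hs : -1 < s) :
    IntegrableOn (fun x : ℝ => x ^ s * Real.exp (-t * x ^ 2)) (Ioi 0) := by
  have h := integrableOn_rpow_mul_exp_neg_mul_rpow hs two_pos ht
  refine h.congr_fun (fun x _ => ?_) measurableSet_Ioi
  beta_reduce
  rw [rpow_two']

lemma aux_key (hα : 0 < α) (ht : 0 < t) (k : ℕ) :
    ∫ x in Ioi (0:ℝ), x ^ (α + (k:ℝ) - 1) * Real.exp (-t * x ^ 2)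
      = t ^ (-(α + (k:ℝ)) / 2) * (1/2) * Real.Gamma ((α + k) / 2) := by
  have hq : (-1:ℝ) < α + (k:ℝ) - 1 := by
    have := Nat.cast_nonneg (α := ℝ) k; linarith
  have h := integral_rpow_mul_exp_neg_mul_rpow (p := 2) (b := t) two_pos hq ht
  rw [show α + (k:ℝ) - 1 + 1 = α + k by ring] at h
  rw [← h]
  refine setIntegral_congr_fun measurableSet_Ioi (fun x _ => ?_)
  rw [rpow_two']

end Aux

/-- For a random variable `X` with gamma density
`g_α(x) = x^(α-1) e^(-x)/Γ(α)` on `(0,∞)`, `α > 0`, the Laplace transform of `X²` is,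
for every `t > 0`, the sum of the convergent series
`E[e^(-t X²)] = (2Γ(α))⁻¹ ∑_{k=0}^∞ (-1)^k (Γ((α+k)/2)/k!) t^(-(α+k)/2)`. -/
theorem laplace_transform_sq_gamma_series
    {Ω : Type*} [MeasureSpace Ω] [IsProbabilityMeasure (ℙ : Measure Ω)]
    (α : ℝ) (hα : 0 < α)
    (X : Ω → ℝ) (hmeas : Measurable X)
    (hdist : Measure.map X ℙ = gammaMeasure α 1)
    (t : ℝ) (ht : 0 < t) :
    HasSum
      (fun k : ℕ =>
        (2 * Real.Gamma α)⁻¹ * ((-1) ^ k * (Real.Gamma ((α + k) / 2) / k.factorial)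
          * t ^ (-(α + k) / 2)))
      (∫ ω, Real.exp (-t * (X ω) ^ 2) ∂ℙ) := by
  have hΓ : 0 < Real.Gamma α := Real.Gamma_pos_of_pos hα
  set μ := (volume : Measure ℝ).restrict (Ioi 0) with hμdef
  set F : ℕ → ℝ → ℝ := fun k x =>
    (Real.Gamma α)⁻¹ * (x ^ (α - 1) * Real.exp (-t * x ^ 2)) * ((-x) ^ k / k.factorial)
    with hFdef
  set G : ℝ → ℝ := fun x =>
    (Real.Gamma α)⁻¹ * (x ^ (α - 1) * Real.exp (-t * x ^ 2)) * Real.exp x with hGdef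
  have hxsplit : ∀ (x : ℝ), 0 < x → ∀ k : ℕ, x ^ (α + (k:ℝ) - 1) = x ^ (α - 1) * x ^ k := by
    intro x hx k
    rw [show α + (k:ℝ) - 1 = (α - 1) + (k:ℝ) by ring, Real.rpow_add hx, Real.rpow_natCast]
  -- integrability of each F k
  have hF_int : ∀ k : ℕ, Integrable (F k) μ := by
    intro k
    have hq : (-1:ℝ) < α + (k:ℝ) - 1 := by
      have := Nat.cast_nonneg (α := ℝ) k; linarith
    have h : IntegrableOn (fun x : ℝ => ((Real.Gamma α)⁻¹ * (-1:ℝ)^k / k.factorial)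
        * (x ^ (α + (k:ℝ) - 1) * Real.exp (-t * x ^ 2))) (Ioi 0) :=
      (aux_base ht hq).const_mul _
    refine h.congr_fun (fun x hx => ?_) measurableSet_Ioi
    have hx : (0:ℝ) < x := hx
    beta_reduce
    rw [hxsplit x hx k]
    simp only [hFdef]
    rw [neg_pow]
    ring
  -- integrability of the dominating function G
  have hG_int : Integrable G μ := by
    have hb : Integrable
        (fun x : ℝ => ((Real.Gamma α)⁻¹ * Real.exp (1/(2*t))) * (x ^ (α - 1) * Real.exp (-(t/2) * x ^ 2))) μ :=
      (aux_base (show (0:ℝ) < t/2 by positivity) (by linarith : (-1:ℝ) < α - 1)).const_mul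
        ((Real.Gamma α)⁻¹ * Real.exp (1/(2*t)))
    refine hb.mono' ?_ ?_
    · apply Measurable.aestronglyMeasurable
      simp only [hGdef]
      fun_prop
    · filter_upwards [ae_restrict_mem measurableSet_Ioi] with x hx
      have hx : (0:ℝ) < x := hx
      have hxp : 0 ≤ x ^ (α - 1) := Real.rpow_nonneg hx.le _
      rw [Real.norm_eq_abs, abs_of_nonneg (by positivity)]
      simp only [hGdef]
      have hexp : Real.exp (-t * x ^ 2) * Real.exp x
          ≤ Real.exp (1/(2*t)) * Real.exp (-(t/2) * x ^ 2) := by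
        rw [← Real.exp_add, ← Real.exp_add]
        apply Real.exp_le_exp.mpr
        have hexpand : (t/2)*(x - 1/t)^2 = (t/2)*x^2 - x + 1/(2*t) := by
          field_simp; ring
        nlinarith [mul_nonneg (by positivity : (0:ℝ) ≤ t/2) (sq_nonneg (x - 1/t))]
      calc (Real.Gamma α)⁻¹ * (x ^ (α - 1) * Real.exp (-t * x ^ 2)) * Real.exp x
          = ((Real.Gamma α)⁻¹ * x ^ (α - 1)) * (Real.exp (-t * x ^ 2) * Real.exp x) := by ring
        _ ≤ ((Real.Gamma α)⁻¹ * x ^ (α - 1)) * (Real.exp (1/(2*t)) * Real.exp (-(t/2) * x ^ 2)) := by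
            apply mul_le_mul_of_nonneg_left hexp (by positivity)
        _ = ((Real.Gamma α)⁻¹ * Real.exp (1/(2*t))) * (x ^ (α - 1) * Real.exp (-(t/2) * x ^ 2)) := by
            ring
  -- summability of the integrals of norms
  have hF_sum : Summable fun k => ∫ x, ‖F k x‖ ∂μ := by
    apply summable_of_sum_range_le (c := ∫ x, G x ∂μ)
      (fun n => integral_nonneg fun x => norm_nonneg _)
    intro n
    rw [← integral_finset_sum _ (fun i _ => (hF_int i).norm)]
    refine integral_mono_ae (integrable_finset_sum _ fun i _ => (hF_int i).norm) hG_int ?_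
    filter_upwards [ae_restrict_mem measurableSet_Ioi] with x hx
    have hx : (0:ℝ) < x := hx
    have hnorm : ∀ i : ℕ, ‖F i x‖
        = (Real.Gamma α)⁻¹ * (x ^ (α - 1) * Real.exp (-t * x ^ 2)) * (x ^ i / i.factorial) := by
      intro i
      simp only [hFdef]
      rw [Real.norm_eq_abs, abs_mul, abs_div, abs_pow, abs_neg, abs_of_pos hx]
      rw [abs_of_nonneg (by positivity), abs_of_nonneg (by positivity)]
    calc ∑ i ∈ Finset.range n, ‖F i x‖
        = (Real.Gamma α)⁻¹ * (x ^ (α - 1) * Real.exp (-t * x ^ 2))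
            * ∑ i ∈ Finset.range n, x ^ i / i.factorial := by
          rw [Finset.mul_sum]; exact Finset.sum_congr rfl fun i _ => hnorm i
      _ ≤ G x := by
          simp only [hGdef]
          exact mul_le_mul_of_nonneg_left (Real.sum_le_exp_of_nonneg hx.le n) (by positivity)
  -- identify the integral
  have hmap : ∫ ω, Real.exp (-t * (X ω) ^ 2) ∂ℙ
      = ∫ x, Real.exp (-t * x ^ 2) ∂(gammaMeasure α 1) := by
    rw [← hdist, integral_map hmeas.aemeasurable]
    exact Measurable.aestronglyMeasurable (by fun_prop)
  have hdens : ∫ x, Real.exp (-t * x ^ 2) ∂(gammaMeasure α 1)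
      = ∫ x, gammaPDFReal α 1 x * Real.exp (-t * x ^ 2) := by
    simp only [gammaMeasure]
    have hrfl : gammaPDF α 1 = fun x => ((Real.toNNReal (gammaPDFReal α 1 x) : ℝ≥0) : ℝ≥0∞) := rfl
    rw [hrfl, integral_withDensity_eq_integral_smul ((measurable_gammaPDFReal α 1).real_toNNReal)]
    refine integral_congr_ae (ae_of_all _ fun x => ?_)
    simp only [NNReal.smul_def, Real.coe_toNNReal _ (gammaPDFReal_nonneg hα one_pos x), smul_eq_mul]
  have hres : ∫ x, gammaPDFReal α 1 x * Real.exp (-t * x ^ 2)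
      = ∫ x, (∑' k, F k x) ∂μ := by
    rw [hμdef, ← integral_indicator measurableSet_Ioi]
    refine integral_congr_ae ?_
    have h0 : ∀ᵐ x : ℝ, x ≠ 0 := by
      refine (ae_iff.mpr ?_); simp [measure_singleton]
    filter_upwards [h0] with x hx0
    by_cases hx : 0 < x
    · rw [Set.indicator_of_mem (show x ∈ Ioi 0 from hx)]
      have hsum : HasSum (fun k => F k x)
          ((Real.Gamma α)⁻¹ * (x ^ (α - 1) * Real.exp (-t * x ^ 2)) * Real.exp (-x)) := by
        have h := NormedSpace.expSeries_div_hasSum_exp (-x)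
        rw [← Real.exp_eq_exp_ℝ] at h
        exact h.mul_left _
      rw [hsum.tsum_eq, gammaPDFReal, if_pos hx.le]
      rw [Real.one_rpow]
      ring_nf
    · rw [Set.indicator_of_notMem (show x ∉ Ioi 0 from hx)]
      have hneg : x < 0 := lt_of_le_of_ne (not_lt.mp hx) hx0
      rw [gammaPDFReal, if_neg (not_le.mpr hneg), zero_mul]
  -- term values
  have hterm : ∀ k : ℕ, ∫ x, F k x ∂μ
      = (2 * Real.Gamma α)⁻¹ * ((-1) ^ k * (Real.Gamma ((α + k) / 2) / k.factorial)
          * t ^ (-(α + (k:ℝ)) / 2)) := by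
    intro k
    have h1 : ∫ x, F k x ∂μ
        = ((Real.Gamma α)⁻¹ * (-1:ℝ)^k / k.factorial)
            * ∫ x in Ioi (0:ℝ), x ^ (α + (k:ℝ) - 1) * Real.exp (-t * x ^ 2) := by
      rw [← integral_const_mul, hμdef]
      refine setIntegral_congr_fun measurableSet_Ioi (fun x hx => ?_)
      have hx : (0:ℝ) < x := hx
      rw [hxsplit x hx k]
      simp only [hFdef]
      rw [neg_pow]
      ring
    rw [h1, aux_key hα ht k, mul_inv]
    ring
  have Hs := MeasureTheory.hasSum_integral_of_summable_integral_norm hF_int hF_sum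
  rw [hmap, hdens, hres]
  have hfun : (fun k : ℕ =>
      (2 * Real.Gamma α)⁻¹ * ((-1) ^ k * (Real.Gamma ((α + k) / 2) / k.factorial)
        * t ^ (-(α + (k:ℝ)) / 2))) = fun k => ∫ x, F k x ∂μ :=
    funext fun k => (hterm k).symm
  rw [hfun]
  exact Hs
end

section
/- For every integer k ≥ 0, E[ (Z/Y²)^k ] = (Γ(αn) · k! / Γ(αn + 2k)) · Σ_{k_1+⋯+k_n=k} Π_{i=1}^n Γ(α + 2k_i)/(Γ(α) k_i!), where the sum runs over all n-tuples of nonnegative integers with sum k. -/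
open MeasureTheory ProbabilityTheory Real Set
open scoped ENNReal

set_option maxHeartbeats 1000000

-- L1
lemma lintegral_rpow_exp {a r : ℝ} (ha : 0 < a) (hr : 0 < r) :
    ∫⁻ t in Ioi (0:ℝ), ENNReal.ofReal (t ^ (a - 1) * exp (-(r * t)))
      = ENNReal.ofReal ((1 / r) ^ a * Gamma a) := by
  have hint : IntegrableOn (fun t : ℝ => t ^ (a - 1) * exp (-(r * t))) (Ioi 0) := by
    have h := integrableOn_rpow_mul_exp_neg_mul_rpow (s := a - 1) (p := 1) (b := r)
      (by linarith) one_pos hr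
    simpa [Real.rpow_one, neg_mul] using h
  have hpos : 0 ≤ᵐ[volume.restrict (Ioi (0:ℝ))] fun t : ℝ => t ^ (a - 1) * exp (-(r * t)) := by
    filter_upwards [ae_restrict_mem measurableSet_Ioi] with x hx
    have hx' : (0:ℝ) < x := hx
    positivity
  rw [← ofReal_integral_eq_lintegral_ofReal hint hpos, integral_rpow_mul_exp_neg_mul_Ioi ha hr]

-- rpow prod
lemma prod_rpow_sum {ι : Type*} (s : Finset ι) (f : ι → ℝ) {x : ℝ} (hx : 0 < x) :
    ∏ i ∈ s, x ^ f i = x ^ (∑ i ∈ s, f i) := by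
  induction s using Finset.cons_induction with
  | empty => simp
  | cons a s ha ih => rw [Finset.prod_cons, Finset.sum_cons, ih, ← Real.rpow_add hx]

-- L0
lemma lintegral_prod_iIndepFun {Ω : Type*} [MeasureSpace Ω] [IsProbabilityMeasure (ℙ : Measure Ω)]
    {n : ℕ} {f : Fin n → Ω → ℝ≥0∞} (hmeas : ∀ i, Measurable (f i))
    (hindep : iIndepFun f ℙ) (s : Finset (Fin n)) :
    ∫⁻ ω, ∏ i ∈ s, f i ω ∂ℙ = ∏ i ∈ s, ∫⁻ ω, f i ω ∂ℙ := by
  induction s using Finset.cons_induction with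
  | empty => simp
  | cons a s ha ih =>
    rw [Finset.prod_cons, ← ih]
    have hind := hindep.indepFun_finsetProd_of_notMem hmeas ha
    have hprodmeas : Measurable (∏ j ∈ s, f j) := by
      have h := Finset.measurable_prod s (fun i (_ : i ∈ s) => hmeas i)
      have : (∏ j ∈ s, f j) = fun a => ∏ i ∈ s, f i a := by
        funext a; simp [Finset.prod_apply]
      rw [this]; exact h
    have key := lintegral_mul_eq_lintegral_mul_lintegral_of_indepFun hprodmeas (hmeas a) hind
    simp only [Pi.mul_apply, Finset.prod_apply] at key
    calc ∫⁻ ω, ∏ i ∈ Finset.cons a s ha, f i ω ∂ℙ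
        = ∫⁻ ω, (∏ i ∈ s, f i ω) * f a ω ∂ℙ := by
          refine lintegral_congr fun ω => ?_
          rw [Finset.prod_cons, mul_comm]
      _ = (∫⁻ ω, ∏ i ∈ s, f i ω ∂ℙ) * ∫⁻ ω, f a ω ∂ℙ := key
      _ = (∫⁻ ω, f a ω ∂ℙ) * ∫⁻ ω, ∏ i ∈ s, f i ω ∂ℙ := mul_comm _ _

-- L2
lemma lintegral_gamma_moment_tilt {α : ℝ} (hα : 0 < α) (v : ℕ) {t : ℝ} (ht : 0 ≤ t) :
    ∫⁻ y, ENNReal.ofReal (y ^ (2 * v) * exp (-(t * y))) ∂(gammaMeasure α 1)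
      = ENNReal.ofReal ((1 / (1 + t)) ^ (α + 2 * (v:ℝ)) * (Gamma (α + 2 * v) / Gamma α)) := by
  have ht1 : (0:ℝ) < 1 + t := by linarith
  have hmg : Measurable fun y : ℝ => ENNReal.ofReal (y ^ (2 * v) * exp (-(t * y))) :=
    ((measurable_id.pow_const (2 * v)).mul ((measurable_id.const_mul t).neg.exp)).ennreal_ofReal
  have hpdfm : Measurable (gammaPDF α 1) := (measurable_gammaPDFReal α 1).ennreal_ofReal
  rw [gammaMeasure, lintegral_withDensity_eq_lintegral_mul _ hpdfm hmg]
  have hsplit := lintegral_add_compl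
    (fun y => (gammaPDF α 1 * fun y : ℝ => ENNReal.ofReal (y ^ (2 * v) * exp (-(t * y)))) y)
    (measurableSet_Ioi (a := (0:ℝ))) (μ := volume)
  rw [← hsplit, compl_Ioi]
  have hzero : ∫⁻ y in Iic (0:ℝ),
      (gammaPDF α 1 * fun y : ℝ => ENNReal.ofReal (y ^ (2 * v) * exp (-(t * y)))) y = 0 := by
    rw [← Measure.restrict_congr_set Iio_ae_eq_Iic]
    rw [setLIntegral_congr_fun (g := fun _ => 0) measurableSet_Iio]
    · simp
    · intro y hy
      simp [gammaPDF_of_neg hy]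
  rw [hzero, add_zero]
  have hpoint : ∀ y ∈ Ioi (0:ℝ),
      (gammaPDF α 1 * fun y : ℝ => ENNReal.ofReal (y ^ (2 * v) * exp (-(t * y)))) y
        = ENNReal.ofReal (1 / Gamma α)
            * ENNReal.ofReal (y ^ (α + 2 * (v:ℝ) - 1) * exp (-((1 + t) * y))) := by
    intro y hy
    have hy' : (0:ℝ) < y := hy
    simp only [Pi.mul_apply]
    rw [gammaPDF_of_nonneg hy'.le, ← ENNReal.ofReal_mul (by positivity),
      ← ENNReal.ofReal_mul (by positivity)]
    congr 1
    rw [one_rpow, ← Real.rpow_natCast y (2 * v),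
      show α + 2 * (v:ℝ) - 1 = (α - 1) + ((2 * v : ℕ) : ℝ) by push_cast; ring,
      Real.rpow_add hy',
      show -((1 + t) * y) = -(1 * y) + -(t * y) by ring, Real.exp_add]
    ring
  rw [setLIntegral_congr_fun measurableSet_Ioi hpoint, lintegral_const_mul'
    _ _ ENNReal.ofReal_ne_top,
    lintegral_rpow_exp (by positivity) ht1, ← ENNReal.ofReal_mul (by positivity)]
  congr 1
  ring

-- L4
lemma lintegral_beta {b : ℝ} (hb : 0 < b) {k : ℕ} (hk : 1 ≤ k) :
    ∫⁻ t in Ioi (0:ℝ), ENNReal.ofReal (t ^ (2 * (k:ℝ) - 1) * (1 / (1 + t)) ^ (b + 2 * (k:ℝ)))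
      = ENNReal.ofReal (Gamma (2 * k) * Gamma b / Gamma (b + 2 * k)) := by
  set c : ℝ := b + 2 * (k:ℝ) with hc
  have hk1 : (1:ℝ) ≤ (k:ℝ) := by exact_mod_cast hk
  have hc0 : 0 < c := by rw [hc]; linarith
  have hk0 : (0:ℝ) < 2 * (k:ℝ) := by linarith
  have hΓc : (0:ℝ) < Gamma c := Gamma_pos_of_pos hc0
  set F : ℝ → ℝ → ℝ≥0∞ := fun t x =>
    ENNReal.ofReal (t ^ (2 * (k:ℝ) - 1) * (x ^ (c - 1) * exp (-((1 + t) * x)))) with hF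
  have hFmeas : Measurable fun p : ℝ × ℝ => F p.1 p.2 := by
    apply Measurable.ennreal_ofReal
    fun_prop
  have way1 : ∫⁻ t in Ioi (0:ℝ), ∫⁻ x in Ioi (0:ℝ), F t x
      = (∫⁻ t in Ioi (0:ℝ),
          ENNReal.ofReal (t ^ (2 * (k:ℝ) - 1) * (1 / (1 + t)) ^ c)) * ENNReal.ofReal (Gamma c) := by
    rw [← lintegral_mul_const' _ _ ENNReal.ofReal_ne_top]
    refine setLIntegral_congr_fun measurableSet_Ioi (fun ⦃t⦄ ht => ?_)
    have ht' : (0:ℝ) < t := ht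
    have h1t : (0:ℝ) < 1 + t := by linarith
    have htp : (0:ℝ) ≤ t ^ (2 * (k:ℝ) - 1) := Real.rpow_nonneg ht'.le _
    calc ∫⁻ x in Ioi (0:ℝ), F t x
        = ENNReal.ofReal (t ^ (2 * (k:ℝ) - 1))
            * ∫⁻ x in Ioi (0:ℝ), ENNReal.ofReal (x ^ (c - 1) * exp (-((1 + t) * x))) := by
          simp_rw [hF, ENNReal.ofReal_mul htp]
          rw [lintegral_const_mul' _ _ ENNReal.ofReal_ne_top]
      _ = ENNReal.ofReal (t ^ (2 * (k:ℝ) - 1)) * ENNReal.ofReal ((1 / (1 + t)) ^ c * Gamma c) := by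
          rw [lintegral_rpow_exp hc0 h1t]
      _ = ENNReal.ofReal (t ^ (2 * (k:ℝ) - 1) * (1 / (1 + t)) ^ c) * ENNReal.ofReal (Gamma c) := by
          rw [← ENNReal.ofReal_mul htp, ← ENNReal.ofReal_mul (by positivity), mul_assoc]
  have way2 : ∫⁻ t in Ioi (0:ℝ), ∫⁻ x in Ioi (0:ℝ), F t x
      = ENNReal.ofReal (Gamma (2 * k) * Gamma b) := by
    rw [lintegral_lintegral_swap (hFmeas.aemeasurable)]
    have inner : ∀ x ∈ Ioi (0:ℝ), ∫⁻ t in Ioi (0:ℝ), F t x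
        = ENNReal.ofReal (Gamma (2 * k) * (x ^ (b - 1) * exp (-(1 * x)))) := by
      intro x hx
      have hx' : (0:ℝ) < x := hx
      have hxe : (0:ℝ) ≤ x ^ (c - 1) * exp (-x) := by positivity
      calc ∫⁻ t in Ioi (0:ℝ), F t x
          = ENNReal.ofReal (x ^ (c - 1) * exp (-x))
              * ∫⁻ t in Ioi (0:ℝ), ENNReal.ofReal (t ^ (2 * (k:ℝ) - 1) * exp (-(x * t))) := by
            rw [← lintegral_const_mul' _ _ ENNReal.ofReal_ne_top]
            refine setLIntegral_congr_fun measurableSet_Ioi (fun ⦃t⦄ ht => ?_)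
            simp only [hF]
            rw [← ENNReal.ofReal_mul hxe]
            congr 1
            rw [show -((1 + t) * x) = -x + -(x * t) by ring, Real.exp_add]
            ring
        _ = ENNReal.ofReal (x ^ (c - 1) * exp (-x)) * ENNReal.ofReal ((1 / x) ^ (2 * (k:ℝ)) * Gamma (2 * k)) := by
            rw [lintegral_rpow_exp hk0 hx']
        _ = ENNReal.ofReal (Gamma (2 * k) * (x ^ (b - 1) * exp (-(1 * x)))) := by
            rw [← ENNReal.ofReal_mul hxe]
            congr 1
            have hxx : x ^ (c - 1) * (1 / x) ^ (2 * (k:ℝ)) = x ^ (b - 1) := by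
              rw [one_div, ← Real.rpow_neg_one x, ← Real.rpow_mul hx'.le, ← Real.rpow_add hx']
              congr 1
              rw [hc]; ring
            rw [show -(1 * x) = -x by ring]
            calc x ^ (c - 1) * exp (-x) * ((1 / x) ^ (2 * (k:ℝ)) * Gamma (2 * k))
                = (x ^ (c - 1) * (1 / x) ^ (2 * (k:ℝ))) * exp (-x) * Gamma (2 * k) := by ring
              _ = Gamma (2 * (k:ℝ)) * (x ^ (b - 1) * exp (-x)) := by rw [hxx]; ring
    rw [setLIntegral_congr_fun measurableSet_Ioi inner]
    simp_rw [ENNReal.ofReal_mul (Gamma_nonneg_of_nonneg hk0.le)]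
    rw [lintegral_const_mul' _ _ ENNReal.ofReal_ne_top, lintegral_rpow_exp hb one_pos,
      one_div_one, Real.one_rpow, one_mul,
      ← ENNReal.ofReal_mul (Gamma_nonneg_of_nonneg hk0.le)]
  have hmain : (∫⁻ t in Ioi (0:ℝ),
      ENNReal.ofReal (t ^ (2 * (k:ℝ) - 1) * (1 / (1 + t)) ^ c)) * ENNReal.ofReal (Gamma c)
      = ENNReal.ofReal (Gamma (2 * k) * Gamma b) := by rw [← way1, way2]
  have hne : ENNReal.ofReal (Gamma c) ≠ 0 := by
    simp [ENNReal.ofReal_eq_zero, not_le, hΓc]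
  calc ∫⁻ t in Ioi (0:ℝ), ENNReal.ofReal (t ^ (2 * (k:ℝ) - 1) * (1 / (1 + t)) ^ c)
      = (∫⁻ t in Ioi (0:ℝ), ENNReal.ofReal (t ^ (2 * (k:ℝ) - 1) * (1 / (1 + t)) ^ c))
          * ENNReal.ofReal (Gamma c) * (ENNReal.ofReal (Gamma c))⁻¹ := by
        rw [mul_assoc, ENNReal.mul_inv_cancel hne ENNReal.ofReal_ne_top, mul_one]
    _ = ENNReal.ofReal (Gamma (2 * k) * Gamma b) * (ENNReal.ofReal (Gamma c))⁻¹ := by rw [hmain]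
    _ = ENNReal.ofReal (Gamma (2 * k) * Gamma b / Gamma c) := by
        rw [ENNReal.ofReal_div_of_pos hΓc, div_eq_mul_inv]

-- L6
lemma ae_pos_of_gammaDist {Ω : Type*} [MeasureSpace Ω] {α : ℝ}
    {Xi : Ω → ℝ} (hm : Measurable Xi) (hd : Measure.map Xi ℙ = gammaMeasure α 1) :
    ∀ᵐ ω ∂(ℙ : Measure Ω), 0 < Xi ω := by
  rw [ae_iff]
  have hset : {ω | ¬ 0 < Xi ω} = Xi ⁻¹' (Iic 0) := by ext ω; simp [not_lt]
  rw [hset, ← Measure.map_apply hm measurableSet_Iic, hd, gammaMeasure,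
    withDensity_apply _ measurableSet_Iic, ← Measure.restrict_congr_set Iio_ae_eq_Iic,
    setLIntegral_congr_fun (g := fun _ => 0) measurableSet_Iio
      (fun ⦃y⦄ hy => gammaPDF_of_neg hy), lintegral_zero]

/-- For every integer `k ≥ 0`,
`E[(Z/Y²)^k] = (Γ(αn) k!/Γ(αn+2k)) ∑_{k₁+⋯+kₙ=k} ∏ᵢ Γ(α+2kᵢ)/(Γ(α) kᵢ!)`. -/
theorem moments_U_sq
    {Ω : Type*} [MeasureSpace Ω] [IsProbabilityMeasure (ℙ : Measure Ω)]
    (n : ℕ) (hn : 2 ≤ n) (α : ℝ) (hα : 0 < α)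
    (X : Fin n → Ω → ℝ) (hmeas : ∀ i, Measurable (X i))
    (hindep : iIndepFun X ℙ)
    (hdist : ∀ i, Measure.map (X i) ℙ = gammaMeasure α 1)
    (Y Z : Ω → ℝ) (hY : Y = fun ω => ∑ i, X i ω) (hZ : Z = fun ω => ∑ i, (X i ω) ^ 2)
    (k : ℕ) :
    ∫ ω, (Z ω / (Y ω) ^ 2) ^ k ∂ℙ
      = Real.Gamma (α * n) * k.factorial / Real.Gamma (α * n + 2 * k) *
          ∑ v ∈ Finset.Nat.antidiagonalTuple n k,
            ∏ i, Real.Gamma (α + 2 * v i) / (Real.Gamma α * (v i).factorial) := by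
  subst hY hZ
  have hαn : (0:ℝ) < α * n := by
    have : (2:ℝ) ≤ (n:ℝ) := by exact_mod_cast hn
    nlinarith
  have hΓα : (0:ℝ) < Gamma α := Gamma_pos_of_pos hα
  have hΓαn : (0:ℝ) < Gamma (α * n) := Gamma_pos_of_pos hαn
  rcases Nat.eq_zero_or_pos k with rfl | hk
  · -- k = 0
    simp only [pow_zero, Nat.factorial_zero, Nat.cast_one, Nat.cast_zero, mul_zero, add_zero,
      Finset.Nat.antidiagonalTuple_zero_right, Finset.sum_singleton, Pi.zero_apply]
    rw [integral_const]
    simp [div_self hΓα.ne', div_self hΓαn.ne']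
  -- k ≥ 1
  have hk1 : (1:ℝ) ≤ (k:ℝ) := by exact_mod_cast hk
  have h2k : (0:ℝ) < 2 * (k:ℝ) := by linarith
  have hΓ2k : (0:ℝ) < Gamma (2 * k) := Gamma_pos_of_pos h2k
  set c : ℝ := α * n + 2 * (k:ℝ) with hc
  have hc0 : (0:ℝ) < c := by rw [hc]; linarith
  have hΓc : (0:ℝ) < Gamma c := Gamma_pos_of_pos hc0
  set A := Finset.Nat.antidiagonalTuple n k with hA
  set Sr : ℝ := ∑ v ∈ A, (Nat.multinomial Finset.univ v : ℝ) * ∏ i, Gamma (α + 2 * v i) / Gamma α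
    with hSr
  have hSrnn : 0 ≤ Sr := by
    refine Finset.sum_nonneg fun v _ => mul_nonneg (by positivity) ?_
    exact Finset.prod_nonneg fun i _ => div_nonneg (Gamma_nonneg_of_nonneg (by positivity))
      (Gamma_nonneg_of_nonneg hα.le)
  have hXpos : ∀ᵐ ω ∂(ℙ : Measure Ω), ∀ i, 0 < X i ω :=
    ae_all_iff.mpr fun i => ae_pos_of_gammaDist (hmeas i) (hdist i)
  have hZm : Measurable fun ω => ∑ i, X i ω ^ 2 := by fun_prop
  have hYm : Measurable fun ω => ∑ i, X i ω := by fun_prop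
  have hnn : 0 ≤ᵐ[(ℙ : Measure Ω)] fun ω => ((∑ i, X i ω ^ 2) / (∑ i, X i ω) ^ 2) ^ k := by
    refine ae_of_all _ fun ω => ?_
    have h1 : (0:ℝ) ≤ ∑ i, X i ω ^ 2 := Finset.sum_nonneg fun i _ => sq_nonneg _
    positivity
  rw [integral_eq_lintegral_of_nonneg_ae hnn (((hZm.div (hYm.pow_const 2)).pow_const k).aestronglyMeasurable)]
  have Tmain : ∫⁻ ω, ENNReal.ofReal (((∑ i, X i ω ^ 2) / (∑ i, X i ω) ^ 2) ^ k) ∂ℙ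
      = ENNReal.ofReal (Sr * (Gamma (α * n) / Gamma c)) := by
    set G : ℝ≥0∞ := ENNReal.ofReal (Gamma (2 * k)) with hG
    have hG0 : G ≠ 0 := by simp [hG, ENNReal.ofReal_eq_zero, not_le, hΓ2k]
    have hGtop : G ≠ ⊤ := ENNReal.ofReal_ne_top
    have hΦmeas : Measurable fun p : Ω × ℝ =>
        ENNReal.ofReal (p.2 ^ (2 * (k:ℝ) - 1) *
          ((∑ i, X i p.1 ^ 2) ^ k * exp (-((∑ i, X i p.1) * p.2)))) := by
      apply Measurable.ennreal_ofReal
      have h1 : Measurable fun p : Ω × ℝ => ∑ i, X i p.1 ^ 2 := hZm.comp measurable_fst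
      have h2 : Measurable fun p : Ω × ℝ => ∑ i, X i p.1 := hYm.comp measurable_fst
      fun_prop
    -- Step 1: pointwise identity
    have hpt : ∀ᵐ ω ∂(ℙ : Measure Ω),
        ENNReal.ofReal (((∑ i, X i ω ^ 2) / (∑ i, X i ω) ^ 2) ^ k)
          = G⁻¹ * ∫⁻ t in Ioi (0:ℝ), ENNReal.ofReal
              (t ^ (2 * (k:ℝ) - 1) * ((∑ i, X i ω ^ 2) ^ k * exp (-((∑ i, X i ω) * t)))) := by
      filter_upwards [hXpos] with ω hω
      set y := ∑ i, X i ω with hy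
      set z := ∑ i, X i ω ^ 2 with hz
      have hy0 : 0 < y := Finset.sum_pos (fun i _ => hω i) ⟨⟨0, by omega⟩, Finset.mem_univ _⟩
      have hz0 : (0:ℝ) ≤ z := Finset.sum_nonneg fun i _ => sq_nonneg _
      have hzk : (0:ℝ) ≤ z ^ k := pow_nonneg hz0 k
      have hrp : (0:ℝ) ≤ (1 / y) ^ (2 * (k:ℝ)) := Real.rpow_nonneg (by positivity) _
      have step : ∫⁻ t in Ioi (0:ℝ),
          ENNReal.ofReal (t ^ (2 * (k:ℝ) - 1) * (z ^ k * exp (-(y * t))))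
          = ENNReal.ofReal (z ^ k) * ENNReal.ofReal ((1 / y) ^ (2 * (k:ℝ)) * Gamma (2 * k)) := by
        rw [← lintegral_rpow_exp h2k hy0, ← lintegral_const_mul' _ _ ENNReal.ofReal_ne_top]
        refine setLIntegral_congr_fun measurableSet_Ioi (fun ⦃t⦄ ht => ?_)
        rw [← ENNReal.ofReal_mul hzk]
        congr 1
        ring
      have hkey : ((z / y ^ 2) ^ k) = z ^ k * (1 / y) ^ (2 * (k:ℝ)) := by
        rw [show (2 * (k:ℝ)) = ((2 * k : ℕ) : ℝ) by push_cast; ring, Real.rpow_natCast,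
          div_pow, ← pow_mul, one_div, inv_pow, ← div_eq_mul_inv]
      calc ENNReal.ofReal ((z / y ^ 2) ^ k)
          = ENNReal.ofReal (z ^ k) * ENNReal.ofReal ((1 / y) ^ (2 * (k:ℝ))) := by
            rw [hkey, ENNReal.ofReal_mul hzk]
        _ = G⁻¹ * (ENNReal.ofReal (z ^ k) *
              (ENNReal.ofReal ((1 / y) ^ (2 * (k:ℝ))) * G)) := by
            calc ENNReal.ofReal (z ^ k) * ENNReal.ofReal ((1 / y) ^ (2 * (k:ℝ)))
                = G⁻¹ * G * (ENNReal.ofReal (z ^ k)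
                    * ENNReal.ofReal ((1 / y) ^ (2 * (k:ℝ)))) := by
                  rw [ENNReal.inv_mul_cancel hG0 hGtop, one_mul]
              _ = G⁻¹ * (ENNReal.ofReal (z ^ k) *
                    (ENNReal.ofReal ((1 / y) ^ (2 * (k:ℝ))) * G)) := by ring
        _ = G⁻¹ * (ENNReal.ofReal (z ^ k) *
              ENNReal.ofReal ((1 / y) ^ (2 * (k:ℝ)) * Gamma (2 * k))) := by
            rw [ENNReal.ofReal_mul hrp]
        _ = G⁻¹ * ∫⁻ t in Ioi (0:ℝ),
              ENNReal.ofReal (t ^ (2 * (k:ℝ) - 1) * (z ^ k * exp (-(y * t)))) := by rw [step]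
    -- Step 4: inner integral for fixed t
    have hinner : ∀ t ∈ Ioi (0:ℝ),
        ∫⁻ ω, ENNReal.ofReal (t ^ (2 * (k:ℝ) - 1) *
            ((∑ i, X i ω ^ 2) ^ k * exp (-((∑ i, X i ω) * t)))) ∂ℙ
          = ENNReal.ofReal (t ^ (2 * (k:ℝ) - 1) * (1 / (1 + t)) ^ c) * ENNReal.ofReal Sr := by
      intro t ht
      have ht0 : (0:ℝ) < t := ht
      have h1t : (0:ℝ) < 1 + t := by linarith
      have htp : (0:ℝ) ≤ t ^ (2 * (k:ℝ) - 1) := Real.rpow_nonneg ht0.le _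
      have hexpand : ∀ ω : Ω, (∑ i, X i ω ^ 2) ^ k * exp (-((∑ i, X i ω) * t))
          = ∑ v ∈ A, (Nat.multinomial Finset.univ v : ℝ) *
              ∏ i, ((X i ω) ^ (2 * v i) * exp (-(t * X i ω))) := by
        intro ω
        rw [Finset.sum_pow_eq_sum_piAntidiag,
          Finset.piAntidiag_univ_fin_eq_antidiagonalTuple, ← hA, Finset.sum_mul]
        refine Finset.sum_congr rfl fun v hv => ?_
        rw [mul_assoc]
        congr 1
        rw [show -((∑ i, X i ω) * t) = ∑ i, -(t * X i ω) by
            rw [Finset.sum_neg_distrib, ← Finset.mul_sum]; ring,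
          Real.exp_sum, ← Finset.prod_mul_distrib]
        exact Finset.prod_congr rfl fun i _ => by rw [pow_mul]
      have hgmeas : ∀ (m : ℕ), Measurable fun x : ℝ =>
          ENNReal.ofReal (x ^ (2 * m) * exp (-(t * x))) := by
        intro m
        apply Measurable.ennreal_ofReal
        fun_prop
      calc ∫⁻ ω, ENNReal.ofReal (t ^ (2 * (k:ℝ) - 1) *
              ((∑ i, X i ω ^ 2) ^ k * exp (-((∑ i, X i ω) * t)))) ∂ℙ
          = ENNReal.ofReal (t ^ (2 * (k:ℝ) - 1)) *
              ∫⁻ ω, ENNReal.ofReal ((∑ i, X i ω ^ 2) ^ k * exp (-((∑ i, X i ω) * t))) ∂ℙ := by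
            simp_rw [ENNReal.ofReal_mul htp]
            rw [lintegral_const_mul' _ _ ENNReal.ofReal_ne_top]
        _ = ENNReal.ofReal (t ^ (2 * (k:ℝ) - 1)) * ∑ v ∈ A,
              ((Nat.multinomial Finset.univ v : ℝ≥0∞) *
                ∏ i, ∫⁻ ω, ENNReal.ofReal ((X i ω) ^ (2 * v i) * exp (-(t * X i ω))) ∂ℙ) := by
            congr 1
            calc ∫⁻ ω, ENNReal.ofReal ((∑ i, X i ω ^ 2) ^ k * exp (-((∑ i, X i ω) * t))) ∂ℙ
                = ∫⁻ ω, ∑ v ∈ A, ENNReal.ofReal ((Nat.multinomial Finset.univ v : ℝ) *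
                    ∏ i, ((X i ω) ^ (2 * v i) * exp (-(t * X i ω)))) ∂ℙ := by
                  refine lintegral_congr fun ω => ?_
                  rw [hexpand ω, ENNReal.ofReal_sum_of_nonneg]
                  intro v _
                  refine mul_nonneg (by positivity) (Finset.prod_nonneg fun i _ => ?_)
                  have : (0:ℝ) ≤ (X i ω) ^ (2 * v i) := by
                    rw [pow_mul]; positivity
                  positivity
              _ = ∑ v ∈ A, ∫⁻ ω, ENNReal.ofReal ((Nat.multinomial Finset.univ v : ℝ) *
                    ∏ i, ((X i ω) ^ (2 * v i) * exp (-(t * X i ω)))) ∂ℙ := by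
                  refine lintegral_finset_sum _ fun v _ => ?_
                  apply Measurable.ennreal_ofReal
                  refine Measurable.const_mul (Finset.measurable_prod _ fun i _ => ?_) _
                  have := hmeas i
                  fun_prop
              _ = ∑ v ∈ A, ((Nat.multinomial Finset.univ v : ℝ≥0∞) *
                    ∏ i, ∫⁻ ω, ENNReal.ofReal ((X i ω) ^ (2 * v i) * exp (-(t * X i ω))) ∂ℙ) := by
                  refine Finset.sum_congr rfl fun v hv => ?_
                  have hnn2 : ∀ i ∈ Finset.univ (α := Fin n), ∀ ω : Ω,
                      (0:ℝ) ≤ (X i ω) ^ (2 * v i) * exp (-(t * X i ω)) := by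
                    intro i _ ω
                    have : (0:ℝ) ≤ (X i ω) ^ (2 * v i) := by rw [pow_mul]; positivity
                    positivity
                  have hcomp : iIndepFun
                      (fun i ω => ENNReal.ofReal ((X i ω) ^ (2 * v i)
                        * exp (-(t * X i ω)))) ℙ := by
                    have := hindep.comp
                      (fun i (x : ℝ) => ENNReal.ofReal (x ^ (2 * v i) * exp (-(t * x))))
                      (fun i => hgmeas (v i))
                    exact this
                  calc ∫⁻ ω, ENNReal.ofReal ((Nat.multinomial Finset.univ v : ℝ) *
                        ∏ i, ((X i ω) ^ (2 * v i) * exp (-(t * X i ω)))) ∂ℙ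
                      = ∫⁻ ω, (Nat.multinomial Finset.univ v : ℝ≥0∞) *
                          ∏ i, ENNReal.ofReal ((X i ω) ^ (2 * v i) * exp (-(t * X i ω))) ∂ℙ := by
                        refine lintegral_congr fun ω => ?_
                        rw [ENNReal.ofReal_mul (by positivity),
                          ENNReal.ofReal_prod_of_nonneg (fun i hi => hnn2 i hi ω),
                          ENNReal.ofReal_natCast]
                    _ = (Nat.multinomial Finset.univ v : ℝ≥0∞) *
                          ∫⁻ ω, ∏ i, ENNReal.ofReal ((X i ω) ^ (2 * v i)
                            * exp (-(t * X i ω))) ∂ℙ := by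
                        rw [lintegral_const_mul' _ _ (ENNReal.natCast_ne_top _)]
                    _ = (Nat.multinomial Finset.univ v : ℝ≥0∞) *
                          ∏ i, ∫⁻ ω, ENNReal.ofReal ((X i ω) ^ (2 * v i)
                            * exp (-(t * X i ω))) ∂ℙ := by
                        have hfmeas : ∀ i : Fin n, Measurable fun ω : Ω =>
                            ENNReal.ofReal ((X i ω) ^ (2 * v i) * exp (-(t * X i ω))) :=
                          fun i => (hgmeas (v i)).comp (hmeas i)
                        rw [lintegral_prod_iIndepFun hfmeas hcomp Finset.univ]
        _ = ENNReal.ofReal (t ^ (2 * (k:ℝ) - 1)) * ∑ v ∈ A,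
              ((Nat.multinomial Finset.univ v : ℝ≥0∞) *
                ENNReal.ofReal ((1 / (1 + t)) ^ c * ∏ i, Gamma (α + 2 * v i) / Gamma α)) := by
            congr 1
            refine Finset.sum_congr rfl fun v hv => ?_
            congr 1
            have hvsum : ∑ i, v i = k := Finset.Nat.mem_antidiagonalTuple.mp (hA ▸ hv)
            have hcoord : ∀ i : Fin n,
                ∫⁻ ω, ENNReal.ofReal ((X i ω) ^ (2 * v i) * exp (-(t * X i ω))) ∂ℙ
                  = ENNReal.ofReal ((1 / (1 + t)) ^ (α + 2 * (v i : ℝ)) *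
                      (Gamma (α + 2 * v i) / Gamma α)) := by
              intro i
              rw [← lintegral_map (hgmeas (v i)) (hmeas i), hdist i,
                lintegral_gamma_moment_tilt hα (v i) ht0.le]
            simp_rw [hcoord]
            rw [← ENNReal.ofReal_prod_of_nonneg (fun i _ => mul_nonneg
              (Real.rpow_nonneg (by positivity) _) (div_nonneg
                (Gamma_nonneg_of_nonneg (by positivity)) (Gamma_nonneg_of_nonneg hα.le)))]
            congr 1
            rw [Finset.prod_mul_distrib, prod_rpow_sum Finset.univ _ (by positivity)]
            congr 2
            rw [Finset.sum_add_distrib, Finset.sum_const, Finset.card_univ, Fintype.card_fin,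
              nsmul_eq_mul, ← Finset.mul_sum, hc]
            push_cast [← hvsum]
            ring
        _ = ENNReal.ofReal (t ^ (2 * (k:ℝ) - 1) * (1 / (1 + t)) ^ c) * ENNReal.ofReal Sr := by
            have hseq : ENNReal.ofReal Sr = ∑ v ∈ A,
                ((Nat.multinomial Finset.univ v : ℝ≥0∞) *
                  ENNReal.ofReal (∏ i, Gamma (α + 2 * v i) / Gamma α)) := by
              rw [hSr, ENNReal.ofReal_sum_of_nonneg]
              · refine Finset.sum_congr rfl fun v _ => ?_
                rw [ENNReal.ofReal_mul (by positivity), ENNReal.ofReal_natCast]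
              · intro v _
                refine mul_nonneg (by positivity) (Finset.prod_nonneg fun i _ =>
                  div_nonneg (Gamma_nonneg_of_nonneg (by positivity))
                    (Gamma_nonneg_of_nonneg hα.le))
            rw [hseq, Finset.mul_sum, Finset.mul_sum]
            refine Finset.sum_congr rfl fun v _ => ?_
            have hrpc : (0:ℝ) ≤ (1 / (1 + t)) ^ c := Real.rpow_nonneg (by positivity) _
            rw [ENNReal.ofReal_mul hrpc, ENNReal.ofReal_mul htp]
            ring
    -- assemble
    calc ∫⁻ ω, ENNReal.ofReal (((∑ i, X i ω ^ 2) / (∑ i, X i ω) ^ 2) ^ k) ∂ℙ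
        = ∫⁻ ω, G⁻¹ * ∫⁻ t in Ioi (0:ℝ), ENNReal.ofReal
            (t ^ (2 * (k:ℝ) - 1) * ((∑ i, X i ω ^ 2) ^ k * exp (-((∑ i, X i ω) * t)))) ∂ℙ :=
          lintegral_congr_ae hpt
      _ = G⁻¹ * ∫⁻ ω, ∫⁻ t in Ioi (0:ℝ), ENNReal.ofReal
            (t ^ (2 * (k:ℝ) - 1) * ((∑ i, X i ω ^ 2) ^ k * exp (-((∑ i, X i ω) * t)))) ∂ℙ :=
          lintegral_const_mul' _ _ (by simp [hGtop, ENNReal.inv_ne_top, hG0])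
      _ = G⁻¹ * ∫⁻ t in Ioi (0:ℝ), ∫⁻ ω, ENNReal.ofReal
            (t ^ (2 * (k:ℝ) - 1) * ((∑ i, X i ω ^ 2) ^ k * exp (-((∑ i, X i ω) * t)))) ∂ℙ := by
          rw [lintegral_lintegral_swap hΦmeas.aemeasurable]
      _ = G⁻¹ * ∫⁻ t in Ioi (0:ℝ),
            ENNReal.ofReal (t ^ (2 * (k:ℝ) - 1) * (1 / (1 + t)) ^ c) * ENNReal.ofReal Sr := by
          rw [setLIntegral_congr_fun measurableSet_Ioi hinner]
      _ = G⁻¹ * (ENNReal.ofReal (Gamma (2 * k) * Gamma (α * n) / Gamma c) * ENNReal.ofReal Sr) := by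
          rw [lintegral_mul_const' _ _ ENNReal.ofReal_ne_top, lintegral_beta hαn hk]
      _ = ENNReal.ofReal (Sr * (Gamma (α * n) / Gamma c)) := by
          rw [show Gamma (2 * k) * Gamma (α * n) / Gamma c
              = Gamma (2 * (k:ℝ)) * (Gamma (α * n) / Gamma c) by ring,
            ENNReal.ofReal_mul hΓ2k.le, ENNReal.ofReal_mul hSrnn, ← hG]
          calc G⁻¹ * (G * ENNReal.ofReal (Gamma (α * ↑n) / Gamma c) * ENNReal.ofReal Sr)
              = G⁻¹ * G * (ENNReal.ofReal Sr * ENNReal.ofReal (Gamma (α * ↑n) / Gamma c)) := by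
                ring
            _ = ENNReal.ofReal Sr * ENNReal.ofReal (Gamma (α * ↑n) / Gamma c) := by
                rw [ENNReal.inv_mul_cancel hG0 hGtop, one_mul]
  rw [Tmain, ENNReal.toReal_ofReal (mul_nonneg hSrnn (by positivity))]
  -- final real algebra
  rw [hSr, Finset.sum_mul, Finset.mul_sum]
  refine Finset.sum_congr rfl fun v hv => ?_
  have hvsum : ∑ i, v i = k := Finset.Nat.mem_antidiagonalTuple.mp (hA ▸ hv)
  have hkfac : ((k.factorial : ℝ)) = (∏ i, ((v i).factorial : ℝ)) * (Nat.multinomial Finset.univ v : ℝ) := by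
    rw [← hvsum]
    exact_mod_cast congrArg (Nat.cast (R := ℝ)) (Nat.multinomial_spec Finset.univ v).symm
  have hprodfac : (0:ℝ) < ∏ i, ((v i).factorial : ℝ) :=
    Finset.prod_pos fun i _ => by exact_mod_cast (v i).factorial_pos
  have hsplit : ∏ i, Gamma (α + 2 * v i) / (Gamma α * (v i).factorial)
      = (∏ i, Gamma (α + 2 * v i) / Gamma α) / ∏ i, ((v i).factorial : ℝ) := by
    rw [← Finset.prod_div_distrib]
    exact Finset.prod_congr rfl fun i _ => by rw [div_div]
  rw [hsplit, hkfac]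
  field_simp
end

section
/- Let β > 0 and let G_β(x) = ∫_0^x ξ^{β−1} e^{−ξ} dξ / Γ(β) be the gamma CDF. Then for all y, z > 0 and every integer j ≥ 0, (−1)^j · (∂/∂y)^j G_β(√(z/y)) = (Γ(β + 2j)/Γ(β)) · (∂/∂z)^j G_{β+2j}(√(z/y)), where the derivatives are the j-th partial derivatives with respect to y and to z respectively. -/
open MeasureTheory Real

/-- The gamma(β,1) CDF `G_β(x) = ∫_0^x ξ^(β-1) e^(-ξ) dξ / Γ(β)`. -/
noncomputable def gammaCDF (β x : ℝ) : ℝ :=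
  (∫ ξ in (0:ℝ)..x, ξ ^ (β - 1) * Real.exp (-ξ)) / Real.Gamma β

open Filter Set Topology
open scoped ContDiff

noncomputable def psi (γ t : ℝ) : ℝ :=
  ∫ ξ in (0:ℝ)..Real.sqrt t, ξ ^ (γ - 1) * Real.exp (-ξ)

noncomputable def gfun (γ t : ℝ) : ℝ :=
  Real.sqrt t ^ (γ - 1) * Real.exp (-Real.sqrt t) / (2 * Real.sqrt t)

lemma psi_hasDerivAt {γ : ℝ} (hγ : 0 < γ) {t : ℝ} (ht : 0 < t) :
    HasDerivAt (psi γ) (gfun γ t) t := by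
  have hst : 0 < Real.sqrt t := Real.sqrt_pos.2 ht
  have hint : IntervalIntegrable (fun ξ : ℝ => ξ ^ (γ - 1) * Real.exp (-ξ)) volume 0 (Real.sqrt t) :=
    (intervalIntegral.intervalIntegrable_rpow' (by linarith)).mul_continuousOn
      (Real.continuous_exp.comp continuous_neg).continuousOn
  have hmeas : StronglyMeasurableAtFilter (fun ξ : ℝ => ξ ^ (γ - 1) * Real.exp (-ξ))
      (𝓝 (Real.sqrt t)) volume := by
    refine ⟨Ioi 0, Ioi_mem_nhds hst, ContinuousOn.aestronglyMeasurable ?_ measurableSet_Ioi⟩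
    intro x hx
    exact ((Real.continuousAt_rpow_const x (γ-1) (Or.inl (ne_of_gt hx))).mul
      ((Real.continuous_exp.comp continuous_neg).continuousAt)).continuousWithinAt
  have hcont : ContinuousAt (fun ξ : ℝ => ξ ^ (γ - 1) * Real.exp (-ξ)) (Real.sqrt t) :=
    (Real.continuousAt_rpow_const _ _ (Or.inl hst.ne')).mul
      ((Real.continuous_exp.comp continuous_neg).continuousAt)
  have h1 := intervalIntegral.integral_hasDerivAt_right hint hmeas hcont
  have h2 := Real.hasDerivAt_sqrt ht.ne'
  have := h1.comp t h2
  convert this using 1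
  all_goals try rfl
  unfold gfun
  field_simp

lemma gfun_shift {γ t : ℝ} (ht : 0 < t) : gfun (γ + 2) t = t * gfun γ t := by
  have hst : 0 < Real.sqrt t := Real.sqrt_pos.2 ht
  have h1 : Real.sqrt t ^ (γ + 2 - 1) = Real.sqrt t ^ (γ - 1) * t := by
    rw [show γ + 2 - 1 = (γ - 1) + 2 by ring, Real.rpow_add hst,
      show (2:ℝ) = ((2:ℕ):ℝ) by norm_num, Real.rpow_natCast, Real.sq_sqrt ht.le]
  unfold gfun
  rw [h1]; ring

lemma gfun_contDiffOn (γ : ℝ) : ContDiffOn ℝ ∞ (gfun γ) (Ioi 0) := by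
  intro x hx
  have hx' : (0:ℝ) < x := hx
  have hst : Real.sqrt x ≠ 0 := (Real.sqrt_pos.2 hx').ne'
  have hsq : ContDiffAt ℝ ∞ (fun t : ℝ => Real.sqrt t) x := Real.contDiffAt_sqrt hx'.ne'
  have h1 : ContDiffAt ℝ ∞ (fun t : ℝ => Real.sqrt t ^ (γ - 1)) x :=
    (Real.contDiffAt_rpow_const_of_ne hst).comp x hsq
  have h2 : ContDiffAt ℝ ∞ (fun t : ℝ => Real.exp (-Real.sqrt t)) x :=
    Real.contDiff_exp.contDiffAt.comp x hsq.neg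
  have h3 : ContDiffAt ℝ ∞ (fun t : ℝ => 2 * Real.sqrt t) x := contDiffAt_const.mul hsq
  exact (((h1.mul h2).div h3 (by positivity)).contDiffWithinAt)

lemma psi_deriv {γ : ℝ} (hγ : 0 < γ) {t : ℝ} (ht : 0 < t) :
    deriv (psi γ) t = gfun γ t := (psi_hasDerivAt hγ ht).deriv

lemma psi_contDiffOn {γ : ℝ} (hγ : 0 < γ) : ContDiffOn ℝ ∞ (psi γ) (Ioi 0) := by
  rw [contDiffOn_infty_iff_deriv_of_isOpen isOpen_Ioi]
  constructor
  · exact fun x hx => ((psi_hasDerivAt hγ hx).differentiableAt).differentiableWithinAt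
  · exact (gfun_contDiffOn γ).congr fun x hx => psi_deriv hγ hx

lemma itd_contDiffOn {F : ℝ → ℝ} (hF : ContDiffOn ℝ ∞ F (Ioi 0)) (n : ℕ) :
    ContDiffOn ℝ ∞ (iteratedDeriv n F) (Ioi 0) := by
  induction n with
  | zero => exact hF
  | succ n ih =>
    rw [iteratedDeriv_succ]
    exact ih.deriv_of_isOpen isOpen_Ioi (by simp)

lemma itd_diffAt {F : ℝ → ℝ} (hF : ContDiffOn ℝ ∞ F (Ioi 0)) (n : ℕ) {x : ℝ} (hx : 0 < x) :
    DifferentiableAt ℝ (iteratedDeriv n F) x :=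
  ((itd_contDiffOn hF n).contDiffAt (Ioi_mem_nhds hx)).differentiableAt (by simp)

lemma itd_hasDerivAt {F : ℝ → ℝ} (hF : ContDiffOn ℝ ∞ F (Ioi 0)) (n : ℕ) {x : ℝ} (hx : 0 < x) :
    HasDerivAt (iteratedDeriv n F) (iteratedDeriv (n + 1) F x) x := by
  have h := (itd_diffAt hF n hx).hasDerivAt
  rwa [← iteratedDeriv_succ] at h

lemma itd_mul_id_deriv {F : ℝ → ℝ} (hF : ContDiffOn ℝ ∞ F (Ioi 0)) (n : ℕ) :
    ∀ x : ℝ, 0 < x → iteratedDeriv n (fun s => s * deriv F s) x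
      = x * iteratedDeriv (n + 1) F x + n * iteratedDeriv n F x := by
  induction n with
  | zero =>
    intro x hx
    simp [iteratedDeriv_one]
  | succ n ih =>
    intro x hx
    rw [iteratedDeriv_succ]
    have heq : iteratedDeriv n (fun s => s * deriv F s)
        =ᶠ[𝓝 x] fun s => s * iteratedDeriv (n + 1) F s + n * iteratedDeriv n F s :=
      eventuallyEq_of_mem (Ioi_mem_nhds hx) fun s hs => ih s hs
    rw [heq.deriv_eq]
    have h1 : HasDerivAt (fun s => s * iteratedDeriv (n + 1) F s + (n:ℝ) * iteratedDeriv n F s)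
        ((1 * iteratedDeriv (n + 1) F x + x * iteratedDeriv (n + 2) F x)
          + (n:ℝ) * iteratedDeriv (n + 1) F x) x :=
      ((hasDerivAt_id x).mul (itd_hasDerivAt hF (n + 1) hx)).add
        ((itd_hasDerivAt hF n hx).const_mul _)
    rw [h1.deriv]
    push_cast
    ring

noncomputable def aFun (γ : ℝ) : ℕ → ℝ → ℝ
  | 0 => psi γ
  | n + 1 => fun t => t * deriv (aFun γ n) t + n * aFun γ n t

lemma aFun_contDiffOn {γ : ℝ} (hγ : 0 < γ) (n : ℕ) :
    ContDiffOn ℝ ∞ (aFun γ n) (Ioi 0) := by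
  induction n with
  | zero => exact psi_contDiffOn hγ
  | succ n ih =>
    exact (contDiffOn_id.mul (ih.deriv_of_isOpen isOpen_Ioi (by simp))).add
      (contDiffOn_const.mul ih)

lemma itd_psi_eq_aFun {γ : ℝ} (hγ : 0 < γ) (j : ℕ) :
    ∀ t : ℝ, 0 < t → iteratedDeriv j (psi (γ + 2 * j)) t = aFun γ j t := by
  induction j with
  | zero => intro t ht; simp [aFun]
  | succ j ih =>
    intro t ht
    have h2j : (0:ℝ) < γ + 2 * j := by positivity
    have hshift : γ + 2 * ((j:ℝ) + 1) = (γ + 2 * j) + 2 := by ring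
    rw [iteratedDeriv_succ']
    have heq : deriv (psi (γ + 2 * ((j:ℕ)+1 : ℕ)))
        =ᶠ[𝓝 t] fun s => s * deriv (psi (γ + 2 * j)) s := by
      refine eventuallyEq_of_mem (Ioi_mem_nhds ht) fun s hs => ?_
      have hs' : (0:ℝ) < s := hs
      rw [show (γ + 2 * ((j:ℕ)+1 : ℕ) : ℝ) = (γ + 2 * j) + 2 by push_cast; ring]
      rw [psi_deriv (by linarith) hs', psi_deriv h2j hs', gfun_shift hs']
    rw [Filter.EventuallyEq.iteratedDeriv_eq j heq]
    rw [itd_mul_id_deriv (psi_contDiffOn h2j) j t ht]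
    have hIHev : iteratedDeriv j (psi (γ + 2 * j)) =ᶠ[𝓝 t] aFun γ j :=
      eventuallyEq_of_mem (Ioi_mem_nhds ht) fun s hs => ih s hs
    rw [show iteratedDeriv (j+1) (psi (γ + 2 * j)) t
        = deriv (iteratedDeriv j (psi (γ + 2 * j))) t from by rw [iteratedDeriv_succ]]
    rw [hIHev.deriv_eq, ih t ht]
    rfl

lemma itd_comp_div {F : ℝ → ℝ} (hF : ContDiffOn ℝ ∞ F (Ioi 0)) {y : ℝ} (hy : 0 < y) (j : ℕ) :
    ∀ z : ℝ, 0 < z → iteratedDeriv j (fun z' => F (z' / y)) z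
      = iteratedDeriv j F (z / y) / y ^ j := by
  induction j with
  | zero => intro z hz; simp
  | succ j ih =>
    intro z hz
    have ht : 0 < z / y := div_pos hz hy
    rw [iteratedDeriv_succ]
    have heq : iteratedDeriv j (fun z' => F (z' / y))
        =ᶠ[𝓝 z] fun z' => iteratedDeriv j F (z' / y) / y ^ j :=
      eventuallyEq_of_mem (Ioi_mem_nhds hz) fun s hs => ih s hs
    rw [heq.deriv_eq]
    have hd : HasDerivAt (fun z' => iteratedDeriv j F (z' / y) / y ^ j)
        ((iteratedDeriv (j+1) F (z / y) * (1 / y)) / y ^ j) z := by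
      have hlin : HasDerivAt (fun z' : ℝ => z' / y) (1 / y) z := by
        simpa using (hasDerivAt_id z).div_const y
      exact ((itd_hasDerivAt hF j ht).comp z hlin).div_const _
    rw [hd.deriv]
    rw [pow_succ]
    field_simp

lemma itd_left {γ : ℝ} (hγ : 0 < γ) {z : ℝ} (hz : 0 < z) (j : ℕ) :
    ∀ y : ℝ, 0 < y → iteratedDeriv j (fun y' => psi γ (z / y')) y
      = (-1) ^ j * aFun γ j (z / y) / y ^ j := by
  induction j with
  | zero => intro y hy; simp [aFun]
  | succ j ih =>
    intro y hy
    have ht : 0 < z / y := div_pos hz hy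
    rw [iteratedDeriv_succ]
    have heq : iteratedDeriv j (fun y' => psi γ (z / y'))
        =ᶠ[𝓝 y] fun y' => (-1) ^ j * aFun γ j (z / y') / y' ^ j :=
      eventuallyEq_of_mem (Ioi_mem_nhds hy) fun s hs => ih s hs
    rw [heq.deriv_eq]
    have hlin : HasDerivAt (fun y' : ℝ => z / y') (-(z / y ^ 2)) y := by
      have := ((hasDerivAt_inv hy.ne').const_mul z)
      simpa [div_eq_mul_inv, mul_comm] using this
    have haty : DifferentiableAt ℝ (aFun γ j) (z / y) :=
      ((aFun_contDiffOn hγ j).contDiffAt (Ioi_mem_nhds ht)).differentiableAt (by simp)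
    have hcomp : HasDerivAt (fun y' => aFun γ j (z / y'))
        (deriv (aFun γ j) (z / y) * -(z / y ^ 2)) y :=
      haty.hasDerivAt.comp y hlin
    have hd : HasDerivAt (fun y' => (-1:ℝ) ^ j * aFun γ j (z / y') / y' ^ j)
        ((((-1:ℝ) ^ j * (deriv (aFun γ j) (z / y) * -(z / y ^ 2))) * y ^ j
          - ((-1:ℝ) ^ j * aFun γ j (z / y)) * (j * y ^ (j - 1))) / (y ^ j) ^ 2) y :=
      (hcomp.const_mul _).div (hasDerivAt_pow j y) (pow_ne_zero j hy.ne')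
    rw [hd.deriv]
    show _ = (-1) ^ (j+1) * ((z / y) * deriv (aFun γ j) (z / y) + j * aFun γ j (z / y)) / y ^ (j+1)
    rcases j with _ | j
    · simp; field_simp
    · have hsub : ((j:ℕ)+1) - 1 = j := rfl
      rw [hsub]
      field_simp
      ring

lemma itd_const_mul (c : ℝ) (f : ℝ → ℝ) (n : ℕ) :
    ∀ x : ℝ, iteratedDeriv n (fun s => c * f s) x = c * iteratedDeriv n f x := by
  induction n generalizing f with
  | zero => intro x; simp
  | succ n ih =>
    intro x
    rw [iteratedDeriv_succ', iteratedDeriv_succ',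
      show deriv (fun s => c * f s) = fun s => c * deriv f s from
        funext fun s => deriv_const_mul_field c, ih (fun s => deriv f s) x]


/-- **identity (A.4).** For `β > 0`, all `y, z > 0` and every `j ≥ 0`,
`(-1)^j (∂/∂y)^j G_β(√(z/y)) = (Γ(β+2j)/Γ(β)) (∂/∂z)^j G_{β+2j}(√(z/y))`. -/
theorem gammaCDF_deriv_identity
    (β : ℝ) (hβ : 0 < β) (y z : ℝ) (hy : 0 < y) (hz : 0 < z) (j : ℕ) :
    (-1 : ℝ) ^ j * iteratedDeriv j (fun y' => gammaCDF β (Real.sqrt (z / y'))) y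
      = Real.Gamma (β + 2 * j) / Real.Gamma β *
          iteratedDeriv j (fun z' => gammaCDF (β + 2 * j) (Real.sqrt (z' / y))) z := by
  have hβj : (0:ℝ) < β + 2 * j := by positivity
  have ht : 0 < z / y := div_pos hz hy
  have hL : (fun y' => gammaCDF β (Real.sqrt (z / y')))
      = fun y' => (Real.Gamma β)⁻¹ * psi β (z / y') := by
    funext y'; rw [gammaCDF, psi, div_eq_inv_mul]
  have hR : (fun z' => gammaCDF (β + 2 * j) (Real.sqrt (z' / y)))
      = fun z' => (Real.Gamma (β + 2 * j))⁻¹ * psi (β + 2 * j) (z' / y) := by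
    funext z'; rw [gammaCDF, psi, div_eq_inv_mul]
  rw [hL, hR, itd_const_mul, itd_const_mul]
  rw [itd_left hβ hz j y hy]
  rw [itd_comp_div (psi_contDiffOn hβj) hy j z hz]
  rw [itd_psi_eq_aFun hβ j (z / y) ht]
  have hΓ : Real.Gamma (β + 2 * j) ≠ 0 := (Real.Gamma_pos_of_pos hβj).ne'
  have hΓβ : Real.Gamma β ≠ 0 := (Real.Gamma_pos_of_pos hβ).ne'
  field_simp
  rw [show ((-1:ℝ) ^ j) ^ 2 = 1 from by
    rw [← pow_mul, mul_comm, pow_mul]; norm_num]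
  ring
end
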